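/- Let t > 0 and let α, β be real numbers with 0 ≤ β ≤ α, and set k(x,y) = (4πt)^{-1/2}·exp(−α|x| − (x−y)²/(4t) + β|y|). Then for every f ∈ L²(ℝ), the integral ∫_ℝ k(x,y) f(y) dy converges absolutely for almost every x, the resulting function Kf belongs to L²(ℝ), and ‖Kf‖_{L²(ℝ)} ≤ 2·exp((α²+β²)t/2)·‖f‖_{L²(ℝ)}. -/

import Mathlib

open MeasureTheory
open scoped ENNReal NNReal

private lemma stmt5_exp_bound (t a b x y : ℝ) (hb : 0 ≤ b) (hba : b ≤ a) :
    -a * |x| - (x - y) ^ 2 / (4 * t) + b * |y| ≤ b * |x - y| - (x - y) ^ 2 / (4 * t) := by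
  have h1 : |y| - |x| ≤ |y - x| := abs_sub_abs_le_abs_sub y x
  have h2 : |y - x| = |x - y| := abs_sub_comm y x
  nlinarith [abs_nonneg x, abs_nonneg (x - y), mul_le_mul_of_nonneg_right hba (abs_nonneg x)]

private lemma stmt5_gauss (t c : ℝ) (ht : 0 < t) :
    Integrable (fun u : ℝ => Real.exp (c * u - u ^ 2 / (4 * t))) volume ∧
    ∫ u : ℝ, Real.exp (c * u - u ^ 2 / (4 * t))
      = Real.sqrt (4 * Real.pi * t) * Real.exp (c ^ 2 * t) := by
  have h4t : 0 < 1 / (4 * t) := by positivity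
  have hfun : (fun u : ℝ => Real.exp (c * u - u ^ 2 / (4 * t)))
      = fun u => Real.exp (c ^ 2 * t) * Real.exp (-(1 / (4 * t)) * (u - 2 * c * t) ^ 2) := by
    funext u
    rw [← Real.exp_add]
    congr 1
    field_simp
    ring
  have hint : Integrable (fun u : ℝ => Real.exp (-(1 / (4 * t)) * (u - 2 * c * t) ^ 2)) volume :=
    (integrable_exp_neg_mul_sq h4t).comp_sub_right (2 * c * t)
  constructor
  · rw [hfun]; exact hint.const_mul _
  · rw [hfun, MeasureTheory.integral_const_mul,
      integral_sub_right_eq_self (fun u : ℝ => Real.exp (-(1 / (4 * t)) * u ^ 2)) (2 * c * t),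
      integral_gaussian, mul_comm]
    congr 2
    field_simp

theorem stmt5 (t a b : ℝ) (ht : 0 < t) (hb : 0 ≤ b) (hba : b ≤ a)
    (k : ℝ → ℝ → ℝ)
    (hk : ∀ x y : ℝ,
      k x y = (Real.sqrt (4 * Real.pi * t))⁻¹ *
        Real.exp (-a * |x| - (x - y) ^ 2 / (4 * t) + b * |y|))
    (f : ℝ → ℂ) (hf : MemLp f 2 volume) :
    (∀ᵐ x : ℝ, Integrable (fun y : ℝ => (k x y : ℂ) * f y) volume) ∧
    MemLp (fun x : ℝ => ∫ y : ℝ, (k x y : ℂ) * f y) 2 volume ∧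
    eLpNorm (fun x : ℝ => ∫ y : ℝ, (k x y : ℂ) * f y) 2 volume
      ≤ ENNReal.ofReal (2 * Real.exp ((a ^ 2 + b ^ 2) * t / 2)) * eLpNorm f 2 volume := by
  have hπt : 0 < 4 * Real.pi * t := by positivity
  have hsq : 0 < Real.sqrt (4 * Real.pi * t) := Real.sqrt_pos.mpr hπt
  set c : ℝ := (Real.sqrt (4 * Real.pi * t))⁻¹ with hc_def
  have hc : 0 < c := by positivity
  -- the dominating convolution kernel
  set g : ℝ → ℝ := fun u => c * Real.exp (b * |u| - u ^ 2 / (4 * t)) with hg_def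
  have hg_nonneg : ∀ u, 0 ≤ g u := fun u => by positivity
  have hkg : ∀ x y, k x y ≤ g (x - y) := by
    intro x y
    rw [hk]
    exact mul_le_mul_of_nonneg_left
      (Real.exp_le_exp.mpr (stmt5_exp_bound t a b x y hb hba)) hc.le
  have hkpos : ∀ x y, 0 < k x y := by
    intro x y; rw [hk]; positivity
  -- constants
  set C : ℝ := 2 * Real.exp (b ^ 2 * t) with hC_def
  set Ce : ℝ≥0∞ := ENNReal.ofReal C with hCe_def
  have hC_pos : 0 < C := by positivity
  have hCe0 : Ce ≠ 0 := (ENNReal.ofReal_pos.mpr hC_pos).ne'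
  have hCetop : Ce ≠ ⊤ := ENNReal.ofReal_ne_top
  -- measurability of g
  have hg_cont : Continuous g := by
    apply continuous_const.mul
    exact (Continuous.sub (continuous_const.mul continuous_abs)
      ((continuous_pow 2).div_const _)).rexp
  have hg_meas : Measurable fun u => ENNReal.ofReal (g u) :=
    ENNReal.measurable_ofReal.comp hg_cont.measurable
  -- ∫⁻ g ≤ Ce
  have hgint : ∫⁻ u, ENNReal.ofReal (g u) ≤ Ce := by
    set h : ℝ → ℝ := fun u => c * Real.exp (b * u - u ^ 2 / (4 * t)) with hh_def
    have hh_nonneg : ∀ u, 0 ≤ h u := fun u => by positivity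
    have hh_int : Integrable h volume := ((stmt5_gauss t b ht).1).const_mul c
    have hh_cont : Continuous h :=
      continuous_const.mul ((Continuous.sub (continuous_const.mul continuous_id)
        ((continuous_pow 2).div_const _)).rexp)
    have hh_meas : Measurable fun u => ENNReal.ofReal (h u) :=
      ENNReal.measurable_ofReal.comp hh_cont.measurable
    have hgh : ∀ u, g u ≤ h u + h (-u) := by
      intro u
      rcases abs_choice u with hu | hu
      · have : g u = h u := by simp only [hg_def, hh_def, hu]
        rw [this]; exact le_add_of_nonneg_right (hh_nonneg _)
      · have : g u = h (-u) := by
          simp only [hg_def, hh_def, hu]; ring_nf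
        rw [this]; exact le_add_of_nonneg_left (hh_nonneg _)
    have hint_h : ∫⁻ u, ENNReal.ofReal (h u) = ENNReal.ofReal (Real.exp (b ^ 2 * t)) := by
      rw [← MeasureTheory.ofReal_integral_eq_lintegral_ofReal hh_int
        (Filter.Eventually.of_forall hh_nonneg)]
      congr 1
      rw [hh_def]
      rw [MeasureTheory.integral_const_mul, (stmt5_gauss t b ht).2, ← mul_assoc,
        inv_mul_cancel₀ hsq.ne', one_mul]
    calc ∫⁻ u, ENNReal.ofReal (g u)
        ≤ ∫⁻ u, (ENNReal.ofReal (h u) + ENNReal.ofReal (h (-u))) := by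
          apply lintegral_mono
          intro u
          show ENNReal.ofReal (g u) ≤ ENNReal.ofReal (h u) + ENNReal.ofReal (h (-u))
          rw [← ENNReal.ofReal_add (hh_nonneg u) (hh_nonneg (-u))]
          exact ENNReal.ofReal_le_ofReal (hgh u)
      _ = (∫⁻ u, ENNReal.ofReal (h u)) + ∫⁻ u, ENNReal.ofReal (h (-u)) :=
          lintegral_add_left hh_meas _
      _ = (∫⁻ u, ENNReal.ofReal (h u)) + ∫⁻ u, ENNReal.ofReal (h u) := by
          congr 1
          exact (Measure.measurePreserving_neg volume).lintegral_comp hh_meas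
      _ = Ce := by
          rw [hint_h, ← ENNReal.ofReal_add (Real.exp_pos _).le (Real.exp_pos _).le,
            hCe_def, hC_def]
          norm_num [two_mul]
  -- kernel measurability
  have hk_cont : Continuous fun p : ℝ × ℝ => k p.1 p.2 := by
    have hk_eq : (fun p : ℝ × ℝ => k p.1 p.2) = fun p : ℝ × ℝ =>
        c * Real.exp (-a * |p.1| - (p.1 - p.2) ^ 2 / (4 * t) + b * |p.2|) :=
      funext fun p => hk p.1 p.2
    rw [hk_eq]
    apply continuous_const.mul
    apply Continuous.rexp
    apply Continuous.add
    · exact Continuous.sub (continuous_const.mul (continuous_abs.comp continuous_fst))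
        (((continuous_fst.sub continuous_snd).pow 2).div_const _)
    · exact continuous_const.mul (continuous_abs.comp continuous_snd)
  set K : ℝ → ℝ → ℝ≥0∞ := fun x y => ENNReal.ofReal (k x y) with hK_def
  have hKm : Measurable fun p : ℝ × ℝ => K p.1 p.2 :=
    ENNReal.measurable_ofReal.comp hk_cont.measurable
  have hKxm : ∀ x, Measurable (K x) := fun x => hKm.comp measurable_prodMk_left
  have hKym : ∀ y, Measurable fun x => K x y := fun y =>
    hKm.comp (measurable_id.prodMk measurable_const)
  have hK0 : ∀ x y, K x y ≠ 0 := fun x y => (ENNReal.ofReal_pos.mpr (hkpos x y)).ne'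
  have hKtop : ∀ x y, K x y ≠ ⊤ := fun x y => ENNReal.ofReal_ne_top
  -- row and column bounds
  have hrow : ∀ x, ∫⁻ y, K x y ≤ Ce := by
    intro x
    calc ∫⁻ y, K x y ≤ ∫⁻ y, ENNReal.ofReal (g (x - y)) :=
          lintegral_mono fun y => ENNReal.ofReal_le_ofReal (hkg x y)
      _ = ∫⁻ u, ENNReal.ofReal (g u) := by
          have hmp : MeasurePreserving (fun y : ℝ => x - y) volume volume := by
            have := (measurePreserving_add_left (volume : Measure ℝ) x).comp
              (Measure.measurePreserving_neg (volume : Measure ℝ))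
            simpa [Function.comp_def, sub_eq_add_neg] using this
          exact hmp.lintegral_comp hg_meas
      _ ≤ Ce := hgint
  have hcol : ∀ y, ∫⁻ x, K x y ≤ Ce := by
    intro y
    calc ∫⁻ x, K x y ≤ ∫⁻ x, ENNReal.ofReal (g (x - y)) :=
          lintegral_mono fun x => ENNReal.ofReal_le_ofReal (hkg x y)
      _ = ∫⁻ u, ENNReal.ofReal (g u) :=
          (measurePreserving_sub_right volume y).lintegral_comp hg_meas
      _ ≤ Ce := hgint
  -- measurable version of |f|
  set f' : ℝ → ℂ := hf.1.mk f with hf'_def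
  have hf'_meas : StronglyMeasurable f' := hf.1.stronglyMeasurable_mk
  set F : ℝ → ℝ≥0∞ := fun y => (‖f' y‖₊ : ℝ≥0∞) with hF_def
  have hFm : Measurable F := hf'_meas.measurable.nnnorm.coe_nnreal_ennreal
  have hFae : (fun y => (‖f y‖₊ : ℝ≥0∞)) =ᵐ[volume] F :=
    hf.1.ae_eq_mk.mono fun y hy => by rw [hF_def]; simp only [hy, hf'_def]
  -- S = ∫ F²
  set S : ℝ≥0∞ := ∫⁻ y, F y ^ (2 : ℝ) with hS_def
  have hS_eq : S = ∫⁻ y, (‖f y‖₊ : ℝ≥0∞) ^ (2 : ℝ) := by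
    rw [hS_def]
    symm
    apply lintegral_congr_ae
    filter_upwards [hFae] with y hy
    have hy' : (‖f y‖₊ : ℝ≥0∞) = F y := hy
    rw [hy']
  have h_eLp : eLpNorm f 2 volume = S ^ (1 / 2 : ℝ) := by
    rw [eLpNorm_eq_lintegral_rpow_enorm_toReal (two_ne_zero) ENNReal.ofNat_ne_top, hS_eq]
    norm_num
    simp only [enorm_eq_nnnorm]
  have hS_lt : S < ⊤ := by
    have h2 : S = (eLpNorm f 2 volume) ^ (2 : ℝ) := by
      rw [h_eLp, ← ENNReal.rpow_mul]
      norm_num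
    rw [h2]
    exact ENNReal.rpow_lt_top_of_nonneg (by norm_num) hf.2.ne
  -- rpow helpers
  have hsq_half : ∀ z : ℝ≥0∞, (z ^ (1 / 2 : ℝ)) ^ (2 : ℝ) = z := by
    intro z
    rw [← ENNReal.rpow_mul]
    norm_num
  -- Cauchy-Schwarz step
  have hCS : ∀ x, ∫⁻ y, K x y * F y
      ≤ Ce ^ (1 / 2 : ℝ) * (∫⁻ y, K x y * F y ^ (2 : ℝ)) ^ (1 / 2 : ℝ) := by
    intro x
    have h22 : Real.HolderConjugate 2 2 := Real.HolderConjugate.two_two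
    have hfm : AEMeasurable (fun y => (K x y) ^ (1 / 2 : ℝ)) volume :=
      ((hKxm x).pow_const _).aemeasurable
    have hgm : AEMeasurable (fun y => (K x y) ^ (1 / 2 : ℝ) * F y) volume :=
      (((hKxm x).pow_const _).mul hFm).aemeasurable
    have hHolder := ENNReal.lintegral_mul_le_Lp_mul_Lq volume h22 hfm hgm
    have h1 : ∀ y, ((fun y => (K x y) ^ (1 / 2 : ℝ)) * fun y => (K x y) ^ (1 / 2 : ℝ) * F y) y
        = K x y * F y := by
      intro y
      simp only [Pi.mul_apply]
      rw [← mul_assoc, ← ENNReal.rpow_add _ _ (hK0 x y) (hKtop x y)]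
      norm_num
    have h2 : ∀ y, ((K x y) ^ (1 / 2 : ℝ)) ^ (2 : ℝ) = K x y := fun y => hsq_half _
    have h3 : ∀ y, ((K x y) ^ (1 / 2 : ℝ) * F y) ^ (2 : ℝ) = K x y * F y ^ (2 : ℝ) := by
      intro y
      rw [ENNReal.mul_rpow_of_nonneg _ _ (by norm_num : (0:ℝ) ≤ 2), hsq_half]
    calc ∫⁻ y, K x y * F y
        = ∫⁻ y, ((fun y => (K x y) ^ (1 / 2 : ℝ)) * fun y => (K x y) ^ (1 / 2 : ℝ) * F y) y :=
          lintegral_congr fun y => (h1 y).symm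
      _ ≤ (∫⁻ y, ((K x y) ^ (1 / 2 : ℝ)) ^ (2:ℝ)) ^ (1 / 2 : ℝ) *
          (∫⁻ y, ((K x y) ^ (1 / 2 : ℝ) * F y) ^ (2:ℝ)) ^ (1 / 2 : ℝ) := hHolder
      _ = (∫⁻ y, K x y) ^ (1 / 2 : ℝ) * (∫⁻ y, K x y * F y ^ (2 : ℝ)) ^ (1 / 2 : ℝ) := by
          rw [lintegral_congr h2, lintegral_congr h3]
      _ ≤ Ce ^ (1 / 2 : ℝ) * (∫⁻ y, K x y * F y ^ (2 : ℝ)) ^ (1 / 2 : ℝ) :=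
          mul_le_mul_left (ENNReal.rpow_le_rpow (hrow x) (by norm_num)) _
  -- the auxiliary function W
  set W : ℝ → ℝ≥0∞ := fun x => ∫⁻ y, K x y * F y ^ (2 : ℝ) with hW_def
  have hW_prod_meas : Measurable fun p : ℝ × ℝ => K p.1 p.2 * F p.2 ^ (2 : ℝ) :=
    hKm.mul ((hFm.comp measurable_snd).pow_const _)
  have hWm : Measurable W := hW_prod_meas.lintegral_prod_right'
  have hWint : ∫⁻ x, W x ≤ Ce * S := by
    rw [hW_def]
    rw [lintegral_lintegral_swap hW_prod_meas.aemeasurable]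
    calc ∫⁻ y, ∫⁻ x, K x y * F y ^ (2 : ℝ)
        = ∫⁻ y, (∫⁻ x, K x y) * F y ^ (2 : ℝ) := by
          apply lintegral_congr fun y => ?_
          exact lintegral_mul_const _ (hKym y)
      _ ≤ ∫⁻ y, Ce * F y ^ (2 : ℝ) :=
          lintegral_mono fun y => mul_le_mul_left (hcol y) _
      _ = Ce * S := lintegral_const_mul' _ _ hCetop
  -- main quadratic bound
  have hT : ∫⁻ x, (∫⁻ y, K x y * F y) ^ (2 : ℝ) ≤ Ce * (Ce * S) := by
    calc ∫⁻ x, (∫⁻ y, K x y * F y) ^ (2 : ℝ)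
        ≤ ∫⁻ x, Ce * W x := by
          apply lintegral_mono fun x => ?_
          calc (∫⁻ y, K x y * F y) ^ (2 : ℝ)
              ≤ (Ce ^ (1 / 2 : ℝ) * (W x) ^ (1 / 2 : ℝ)) ^ (2 : ℝ) :=
                ENNReal.rpow_le_rpow (hCS x) (by norm_num)
            _ = Ce * W x := by
                rw [ENNReal.mul_rpow_of_nonneg _ _ (by norm_num : (0:ℝ) ≤ 2),
                  hsq_half, hsq_half]
      _ = Ce * ∫⁻ x, W x := lintegral_const_mul' _ _ hCetop
      _ ≤ Ce * (Ce * S) := mul_le_mul_right hWint _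
  -- enorm identity
  have h_enorm : ∀ x, ∀ᵐ y : ℝ, (‖(k x y : ℂ) * f y‖₊ : ℝ≥0∞) = K x y * F y := by
    intro x
    filter_upwards [hFae] with y hy
    rw [nnnorm_mul, ENNReal.coe_mul, Complex.nnnorm_real, ← enorm_eq_nnnorm (k x y),
      Real.enorm_eq_ofReal (hkpos x y).le, ← hy]
  -- part 1 : a.e. integrability
  have hW_ae_lt : ∀ᵐ x : ℝ, W x < ⊤ := by
    apply ae_lt_top hWm
    exact (hWint.trans_lt (ENNReal.mul_lt_top ENNReal.ofReal_lt_top hS_lt)).ne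
  have hkx_cont : ∀ x, Continuous (fun y => k x y) := fun x =>
    hk_cont.comp (continuous_const.prodMk continuous_id)
  have h_int : ∀ᵐ x : ℝ, Integrable (fun y : ℝ => (k x y : ℂ) * f y) volume := by
    filter_upwards [hW_ae_lt] with x hWx
    refine ⟨((Complex.continuous_ofReal.comp (hkx_cont x)).aestronglyMeasurable).mul hf.1, ?_⟩
    rw [HasFiniteIntegral]
    calc ∫⁻ y, (‖(k x y : ℂ) * f y‖₊ : ℝ≥0∞) = ∫⁻ y, K x y * F y :=
          lintegral_congr_ae (h_enorm x)
      _ ≤ Ce ^ (1 / 2 : ℝ) * (W x) ^ (1 / 2 : ℝ) := hCS x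
      _ < ⊤ := ENNReal.mul_lt_top
          (ENNReal.rpow_lt_top_of_nonneg (by norm_num) hCetop)
          (ENNReal.rpow_lt_top_of_nonneg (by norm_num) hWx.ne)
  -- a.e. strong measurability of the integral
  have h_aesm : AEStronglyMeasurable (fun x : ℝ => ∫ y : ℝ, (k x y : ℂ) * f y) volume := by
    have hprod : AEStronglyMeasurable (fun z : ℝ × ℝ => (k z.1 z.2 : ℂ) * f z.2)
        (volume.prod volume) :=
      ((Complex.continuous_ofReal.comp hk_cont).aestronglyMeasurable).mul hf.1.comp_snd
    exact hprod.integral_prod_right'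
  -- norm bound pointwise
  have h_norm_le : ∀ x, (‖∫ y : ℝ, (k x y : ℂ) * f y‖₊ : ℝ≥0∞) ≤ ∫⁻ y, K x y * F y := by
    intro x
    refine (enorm_integral_le_lintegral_enorm _).trans_eq ?_
    exact lintegral_congr_ae (h_enorm x)
  -- eLpNorm bound with constant Ce
  have h_main : eLpNorm (fun x : ℝ => ∫ y : ℝ, (k x y : ℂ) * f y) 2 volume
      ≤ Ce * eLpNorm f 2 volume := by
    rw [eLpNorm_eq_lintegral_rpow_enorm_toReal (two_ne_zero) ENNReal.ofNat_ne_top]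
    have htoReal : (2 : ℝ≥0∞).toReal = (2 : ℝ) := by norm_num
    rw [htoReal]
    calc (∫⁻ x, (‖∫ y : ℝ, (k x y : ℂ) * f y‖₊ : ℝ≥0∞) ^ (2:ℝ)) ^ (1 / (2:ℝ))
        ≤ (∫⁻ x, (∫⁻ y, K x y * F y) ^ (2:ℝ)) ^ (1 / (2:ℝ)) := by
          apply ENNReal.rpow_le_rpow _ (by norm_num)
          exact lintegral_mono fun x => ENNReal.rpow_le_rpow (h_norm_le x) (by norm_num)
      _ ≤ (Ce * (Ce * S)) ^ (1 / (2:ℝ)) := ENNReal.rpow_le_rpow hT (by norm_num)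
      _ = Ce * S ^ (1 / 2 : ℝ) := by
          have hCesq : (Ce * Ce) ^ (1 / 2 : ℝ) = Ce := by
            rw [ENNReal.mul_rpow_of_nonneg _ _ (by norm_num : (0:ℝ) ≤ 1/2),
              ← ENNReal.rpow_add _ _ hCe0 hCetop]
            norm_num
          rw [← mul_assoc, ENNReal.mul_rpow_of_nonneg _ _ (by norm_num : (0:ℝ) ≤ 1/2), hCesq]
      _ = Ce * eLpNorm f 2 volume := by rw [h_eLp]
  -- final constant comparison
  have hCle : Ce ≤ ENNReal.ofReal (2 * Real.exp ((a ^ 2 + b ^ 2) * t / 2)) := by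
    apply ENNReal.ofReal_le_ofReal
    have h1 : b ^ 2 * t ≤ (a ^ 2 + b ^ 2) * t / 2 := by
      nlinarith [mul_nonneg (mul_nonneg (sub_nonneg.mpr hba) (by linarith : (0:ℝ) ≤ a + b)) ht.le]
    have h2 := Real.exp_le_exp.mpr h1
    rw [hC_def]
    linarith
  refine ⟨h_int, ⟨h_aesm, ?_⟩, ?_⟩
  · exact h_main.trans_lt (ENNReal.mul_lt_top ENNReal.ofReal_lt_top hf.2)
  · exact h_main.trans (mul_le_mul_left hCle _)
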